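/- For matrices Q_1, …, Q_L ∈ ℝ^{J×r_l} each with orthonormal columns, every singular value of the concatenation Q = [Q_1 ⋯ Q_L] is at most √L, and the multiplicity of the singular value √L equals dim(∩_{l=1}^L col(Q_l)). -/

import Mathlib

open Matrix

/-- If a basis consists of eigenvectors, the dimension of the `t`-eigenspace is the
number of basis vectors with eigenvalue `t`. -/
lemma aux_finrank_eigen {K V : Type*} [Field K] [AddCommGroup V] [Module K V]
    {ι : Type*} [Fintype ι] [DecidableEq ι] [DecidableEq K]
    (B : Module.Basis ι K V) (f : V →ₗ[K] V) (μ : ι → K) (h : ∀ i, f (B i) = μ i • B i) (t : K)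
    (E : Submodule K V) (hE : ∀ x, x ∈ E ↔ f x = t • x) :
    Nat.card {i // μ i = t} = Module.finrank K E := by
  classical
  have hEspan : E = Submodule.span K (Set.range fun i : {i // μ i = t} => B i.1) := by
    apply le_antisymm
    · intro x hx
      rw [hE] at hx
      -- coefficients
      have hx2 : f x = ∑ i, (B.repr x i * μ i) • B i := by
        conv_lhs => rw [← B.sum_repr x]
        rw [map_sum]
        simp_rw [_root_.map_smul, h, smul_smul]
      have hx3 : t • x = ∑ i, (t * B.repr x i) • B i := by
        conv_lhs => rw [← B.sum_repr x]
        rw [Finset.smul_sum]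
        simp_rw [smul_smul]
      have h1 : ⇑(B.repr (f x)) = fun i => B.repr x i * μ i := by
        rw [hx2]; exact B.repr_sum_self _
      have h2 : ⇑(B.repr (t • x)) = fun i => t * B.repr x i := by
        rw [hx3]; exact B.repr_sum_self _
      have e : (fun i => B.repr x i * μ i) = fun i => t * B.repr x i := by
        rw [← h1, ← h2, hx]
      have hco : ∀ i, B.repr x i * μ i = t * B.repr x i := fun i => congrFun e i
      have hzero : ∀ i, μ i ≠ t → B.repr x i = 0 := by
        intro i hi
        have this := hco i
        have : (μ i - t) * B.repr x i = 0 := by ring_nf; linear_combination this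
        rcases mul_eq_zero.1 this with h1 | h1
        · exact absurd (sub_eq_zero.1 h1) hi
        · exact h1
      -- x is in the span
      have : x = ∑ i ∈ Finset.univ.filter (fun i => μ i = t), B.repr x i • B i := by
        conv_lhs => rw [← B.sum_repr x]
        rw [Finset.sum_filter]
        refine Finset.sum_congr rfl fun i _ => ?_
        by_cases hi : μ i = t
        · simp [hi]
        · simp [hi, hzero i hi]
      rw [this]
      refine Submodule.sum_mem _ fun i hi => Submodule.smul_mem _ _ ?_
      refine Submodule.subset_span ⟨⟨i, (Finset.mem_filter.1 hi).2⟩, rfl⟩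
    · rw [Submodule.span_le]
      rintro _ ⟨i, rfl⟩
      rw [SetLike.mem_coe, hE, h i.1, i.2]
  have hli : LinearIndependent K (fun i : {i // μ i = t} => B i.1) :=
    B.linearIndependent.comp Subtype.val Subtype.val_injective
  rw [hEspan, Nat.card_eq_fintype_card]
  exact (finrank_span_eq_card hli).symm

/-- For matrices `Q l` with orthonormal columns and `Q` their horizontal
concatenation, every singular value of `Q` is at most `√L`, and the multiplicity of the
singular value `√L` equals `dim (⋂ l, col (Q l))`. Equivalently (squaring), every
eigenvalue of the symmetric matrix `Q Qᵀ` is at most `L`, and the multiplicity of the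
eigenvalue `L` equals `dim (⋂ l, col (Q l))`. -/
theorem stmt5 (J L : ℕ) (r : Fin L → ℕ)
    (Q : (l : Fin L) → Matrix (Fin J) (Fin (r l)) ℝ)
    (horth : ∀ l, (Q l)ᵀ * Q l = 1)
    (hA : (((Matrix.of fun (i : Fin J) (p : (l : Fin L) × Fin (r l)) => Q p.1 i p.2) *
        (Matrix.of fun (i : Fin J) (p : (l : Fin L) × Fin (r l)) => Q p.1 i p.2)ᵀ)).IsHermitian) :
    (∀ i, hA.eigenvalues i ≤ (L : ℝ)) ∧
    Nat.card {i : Fin J // hA.eigenvalues i = (L : ℝ)}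
      = Module.finrank ℝ ↥(⨅ l, LinearMap.range (Q l).mulVecLin) := by
  classical
  set Qb : Matrix (Fin J) ((l : Fin L) × Fin (r l)) ℝ :=
    Matrix.of fun (i : Fin J) (p : (l : Fin L) × Fin (r l)) => Q p.1 i p.2 with hQb
  set A : Matrix (Fin J) (Fin J) ℝ := Qb * Qbᵀ with hAdef
  set P : Fin L → Matrix (Fin J) (Fin J) ℝ := fun l => Q l * (Q l)ᵀ with hP
  have hAsum : A = ∑ l, P l := by
    ext i j
    simp only [hAdef, hP, hQb, Matrix.sum_apply, mul_apply, transpose_apply, of_apply]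
    rw [← Finset.univ_sigma_univ, Finset.sum_sigma]
  have hdnn : ∀ (v : Fin J → ℝ), 0 ≤ v ⬝ᵥ v :=
    fun v => Finset.sum_nonneg fun i _ => mul_self_nonneg (v i)
  -- dot product with projection
  have key1 : ∀ l (x : Fin J → ℝ),
      x ⬝ᵥ (P l *ᵥ x) = ((Q l)ᵀ *ᵥ x) ⬝ᵥ ((Q l)ᵀ *ᵥ x) := by
    intro l x
    rw [hP, ← mulVec_mulVec, dotProduct_mulVec, ← mulVec_transpose]
  have keyP : ∀ l (x : Fin J → ℝ),
      (P l *ᵥ x) ⬝ᵥ (P l *ᵥ x) = x ⬝ᵥ (P l *ᵥ x) := by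
    intro l x
    rw [key1, hP, ← mulVec_mulVec, dotProduct_mulVec, vecMul_mulVec, horth, vecMul_one]
  have key2 : ∀ l (x : Fin J → ℝ),
      (x - P l *ᵥ x) ⬝ᵥ (x - P l *ᵥ x) = x ⬝ᵥ x - x ⬝ᵥ (P l *ᵥ x) := by
    intro l x
    have h2 : (P l *ᵥ x) ⬝ᵥ x = x ⬝ᵥ (P l *ᵥ x) := dotProduct_comm _ _
    rw [sub_dotProduct, dotProduct_sub, dotProduct_sub, keyP, h2]
    ring
  have hbound : ∀ l (x : Fin J → ℝ), x ⬝ᵥ (P l *ᵥ x) ≤ x ⬝ᵥ x := by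
    intro l x
    have h := key2 l x
    have := hdnn (x - P l *ᵥ x)
    linarith
  have heq : ∀ l (x : Fin J → ℝ), x ⬝ᵥ (P l *ᵥ x) = x ⬝ᵥ x → P l *ᵥ x = x := by
    intro l x hx
    have h := key2 l x
    rw [hx, sub_self] at h
    have := dotProduct_self_eq_zero.1 h
    have := sub_eq_zero.1 this
    exact this.symm
  -- range characterization
  have hrange : ∀ l (x : Fin J → ℝ),
      P l *ᵥ x = x ↔ x ∈ LinearMap.range (Q l).mulVecLin := by
    intro l x
    constructor
    · intro hx
      exact ⟨(Q l)ᵀ *ᵥ x, by rw [mulVecLin_apply, mulVec_mulVec]; exact hx⟩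
    · rintro ⟨y, rfl⟩
      simp only [mulVecLin_apply, hP]
      rw [mulVec_mulVec, Matrix.mul_assoc, horth, Matrix.mul_one]
  have hdots : ∀ (x : Fin J → ℝ) (f : Fin L → Fin J → ℝ),
      x ⬝ᵥ ∑ l, f l = ∑ l, x ⬝ᵥ f l := by
    intro x f
    simp only [dotProduct, Finset.sum_apply, Finset.mul_sum]
    rw [Finset.sum_comm]
  have hsumv : ∀ x : Fin J → ℝ, (∑ l, P l) *ᵥ x = ∑ l, P l *ᵥ x := by
    intro x
    ext j
    simp only [mulVec, dotProduct, Matrix.sum_apply, Finset.sum_apply, Finset.sum_mul]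
    rw [Finset.sum_comm]
  -- eigenspace characterization
  have hchar : ∀ x : Fin J → ℝ,
      A *ᵥ x = (L : ℝ) • x ↔ x ∈ ⨅ l, LinearMap.range (Q l).mulVecLin := by
    intro x
    rw [Submodule.mem_iInf]
    constructor
    · intro hx l
      rw [← hrange]
      apply heq
      have hsum : ∑ l, x ⬝ᵥ (P l *ᵥ x) = ∑ _l : Fin L, x ⬝ᵥ x := by
        have : x ⬝ᵥ (A *ᵥ x) = (L : ℝ) * (x ⬝ᵥ x) := by
          rw [hx, dotProduct_smul, smul_eq_mul]
        rw [Finset.sum_const, Finset.card_univ, Fintype.card_fin, nsmul_eq_mul, ← this,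
          hAsum, hsumv, hdots]
      exact (Finset.sum_eq_sum_iff_of_le (fun l _ => hbound l x)).1 hsum l (Finset.mem_univ l)
    · intro hx
      have : ∀ l, P l *ᵥ x = x := fun l => (hrange l x).2 (hx l)
      rw [hAsum, hsumv]
      simp_rw [this]
      rw [Finset.sum_const, Finset.card_univ, Fintype.card_fin, ← Nat.cast_smul_eq_nsmul ℝ]
  have hchar' : ∀ x : Fin J → ℝ,
      x ∈ ⨅ l, LinearMap.range (Q l).mulVecLin ↔ A.mulVecLin x = (L : ℝ) • x := by
    intro x
    rw [mulVecLin_apply]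
    exact (hchar x).symm
  constructor
  · intro i
    have hmv : A *ᵥ ⇑(hA.eigenvectorBasis i) = hA.eigenvalues i • ⇑(hA.eigenvectorBasis i) :=
      hA.mulVec_eigenvectorBasis i
    set v : Fin J → ℝ := ⇑(hA.eigenvectorBasis i) with hv
    have hnorm : v ⬝ᵥ v = 1 := by
      have h2 : (inner ℝ (hA.eigenvectorBasis i) (hA.eigenvectorBasis i) : ℝ) = 1 := by
        rw [real_inner_self_eq_norm_mul_norm, hA.eigenvectorBasis.orthonormal.1 i]
        norm_num
      simp only [PiLp.inner_apply, RCLike.inner_apply, conj_trivial] at h2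
      simpa [dotProduct, hv] using h2
    have hval : hA.eigenvalues i = ∑ l, v ⬝ᵥ (P l *ᵥ v) := by
      rw [← hdots, ← hsumv, ← hAsum, hmv, dotProduct_smul, smul_eq_mul, hnorm, mul_one]
    rw [hval]
    calc ∑ l, v ⬝ᵥ (P l *ᵥ v) ≤ ∑ _l : Fin L, (1 : ℝ) :=
          Finset.sum_le_sum fun l _ => hnorm ▸ hbound l v
      _ = (L : ℝ) := by simp
  · have hB : ∀ i, A.mulVecLin
        ((hA.eigenvectorBasis.toBasis.map (WithLp.linearEquiv 2 ℝ (Fin J → ℝ))) i)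
        = hA.eigenvalues i •
          ((hA.eigenvectorBasis.toBasis.map (WithLp.linearEquiv 2 ℝ (Fin J → ℝ))) i) := by
      intro i
      simp only [Module.Basis.map_apply, OrthonormalBasis.coe_toBasis]
      exact hA.mulVec_eigenvectorBasis i
    exact aux_finrank_eigen (hA.eigenvectorBasis.toBasis.map (WithLp.linearEquiv 2 ℝ (Fin J → ℝ)))
      A.mulVecLin hA.eigenvalues hB (L : ℝ) _ hchar'
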